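/- arXiv:1301.2809 — 2 statements merged into one kernel-verified Lean document; each statement's English description precedes it below -/
import Mathlib

section
/- Let X be a compact metric space, and let P₁, Q₁ be open sets with disjoint closures, and W̃ an open set such that both closure(P₁) \ W̃ and closure(Q₁) \ W̃ are non-empty and W̃ contains no partition of X between closure(P₁) and closure(Q₁). Then there exists a continuum K ⊂ X \ W̃ joining closure(P₁) and closure(Q₁). -/
open Set Function Topology

/-- `C` is a partition of the ambient space between `A` and `B`. -/
def IsPartitionBetween {X : Type*} [TopologicalSpace X] (C A B : Set X) : Prop :=
  IsClosed C ∧ ∃ U V : Set X, IsOpen U ∧ IsOpen V ∧ A ⊆ U ∧ B ⊆ V ∧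
    Disjoint U V ∧ Cᶜ = U ∪ V

/-- If `W̃` is an open subset of a compact metric space containing no partition between
`closure P₁` and `closure Q₁`, and both `closure P₁ \ W̃` and `closure Q₁ \ W̃` are
non-empty, then there is a continuum `K ⊆ X \ W̃` joining `closure P₁` and `closure Q₁`. -/
theorem statement16 (X : Type) [MetricSpace X] [CompactSpace X]
    (P₁ Q₁ W : Set X) (hP : IsOpen P₁) (hQ : IsOpen Q₁)
    (hPQ : Disjoint (closure P₁) (closure Q₁)) (hW : IsOpen W)
    (hPne : (closure P₁ \ W).Nonempty) (hQne : (closure Q₁ \ W).Nonempty)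
    (hnopart : ¬ ∃ C : Set X, C ⊆ W ∧ IsPartitionBetween C (closure P₁) (closure Q₁)) :
    ∃ K : Set X, K ⊆ Wᶜ ∧ IsCompact K ∧ IsConnected K ∧
      (K ∩ closure P₁).Nonempty ∧ (K ∩ closure Q₁).Nonempty := by
  set Y : Set X := Wᶜ with hY
  have hYclosed : IsClosed Y := hW.isClosed_compl
  haveI : CompactSpace Y := isCompact_iff_compactSpace.mp hYclosed.isCompact
  set A : Set Y := Subtype.val ⁻¹' closure P₁ with hA
  set B : Set Y := Subtype.val ⁻¹' closure Q₁ with hB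
  have hAclosed : IsClosed A := isClosed_closure.preimage continuous_subtype_val
  have hBclosed : IsClosed B := isClosed_closure.preimage continuous_subtype_val
  have hAcomp : IsCompact A := hAclosed.isCompact
  have hBcomp : IsCompact B := hBclosed.isCompact
  -- Step 1: no clopen of Y contains A and is disjoint from B
  have key : ∀ F : Set Y, IsClopen F → A ⊆ F → Disjoint F B → False := by
    intro F hF hAF hFB
    have hF1 : IsCompact (Subtype.val '' F : Set X) :=
      (hF.1.isCompact).image continuous_subtype_val
    have hF2 : IsCompact (Subtype.val '' Fᶜ : Set X) :=
      (hF.compl.1.isCompact).image continuous_subtype_val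
    set A' : Set X := Subtype.val '' F ∪ closure P₁
    set B' : Set X := Subtype.val '' Fᶜ ∪ closure Q₁
    have hA'closed : IsClosed A' := (hF1.isClosed).union isClosed_closure
    have hB'closed : IsClosed B' := (hF2.isClosed).union isClosed_closure
    have hdisj : Disjoint A' B' := by
      rw [Set.disjoint_union_left]
      constructor
      · rw [Set.disjoint_union_right]
        constructor
        · rintro s hs1 hs2 x hx
          obtain ⟨y, hyF, rfl⟩ := hs1 hx
          obtain ⟨z, hzF, hz⟩ := hs2 hx
          have : z = y := Subtype.val_injective hz
          exact hzF (this ▸ hyF)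
        · rintro s hs1 hs2 x hx
          obtain ⟨y, hyF, rfl⟩ := hs1 hx
          exact (hFB.le_bot ⟨hyF, hs2 hx⟩)
      · rw [Set.disjoint_union_right]
        refine ⟨?_, hPQ⟩
        rintro s hs1 hs2 x hx
        obtain ⟨y, hyF, hy⟩ := hs2 hx
        exact hyF (hAF (by rw [hA, Set.mem_preimage, hy]; exact hs1 hx))
    obtain ⟨U, V, hU, hV, hA'U, hB'V, hUV⟩ := normal_separation hA'closed hB'closed hdisj
    apply hnopart
    refine ⟨(U ∪ V)ᶜ, ?_, (hU.union hV).isClosed_compl, U, V, hU, hV,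
      fun x hx => hA'U (Or.inr hx), fun x hx => hB'V (Or.inr hx), hUV, compl_compl _⟩
    intro x hx
    by_contra hxW
    have hxY : x ∈ Y := hxW
    rcases Classical.em (⟨x, hxY⟩ ∈ F) with h | h
    · exact hx (Or.inl (hA'U (Or.inl ⟨⟨x, hxY⟩, h, rfl⟩)))
    · exact hx (Or.inr (hB'V (Or.inl ⟨⟨x, hxY⟩, h, rfl⟩)))
  -- Step 2: some connected component of Y meets both A and B
  have main : ∃ a : Y, a ∈ A ∧ (connectedComponent a ∩ B).Nonempty := by
    by_contra h
    push_neg at h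
    have step : ∀ a : A, ∃ F : Set Y, IsClopen F ∧ (a : Y) ∈ F ∧ Disjoint F B := by
      rintro ⟨a, ha⟩
      have hdisj : Disjoint (connectedComponent a) B := by
        exact disjoint_iff_inter_eq_empty.mpr (h a ha)
      have hBsub : B ⊆ ⋃ s : { s : Set Y // IsClopen s ∧ a ∈ s }, (↑s)ᶜ := by
        intro b hb
        by_contra hb'
        simp only [Set.mem_iUnion, Set.mem_compl_iff, not_exists, not_not] at hb'
        have : b ∈ connectedComponent a := by
          rw [connectedComponent_eq_iInter_isClopen, Set.mem_iInter]
          exact fun s => hb' s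
        exact hdisj.le_bot ⟨this, hb⟩
      obtain ⟨t, ht⟩ := hBcomp.elim_finite_subcover _ (fun s => s.2.1.compl.2) hBsub
      refine ⟨⋂ s ∈ t, (s : Set Y), isClopen_biInter_finset (fun s _ => s.2.1),
        Set.mem_iInter₂.mpr (fun s _ => s.2.2), ?_⟩
      rw [Set.disjoint_right]
      intro b hb
      obtain ⟨s, hst, hbs⟩ := Set.mem_iUnion₂.mp (ht hb)
      exact fun hmem => hbs (Set.mem_iInter₂.mp hmem s hst)
    choose F hFclopen hFmem hFdisj using step
    have hAsub : A ⊆ ⋃ a : A, F a := fun x hx =>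
      Set.mem_iUnion.mpr ⟨⟨x, hx⟩, hFmem ⟨x, hx⟩⟩
    obtain ⟨t, ht⟩ := hAcomp.elim_finite_subcover _ (fun a => (hFclopen a).2) hAsub
    refine key (⋃ a ∈ t, F a) (isClopen_biUnion_finset (fun a _ => hFclopen a)) ht ?_
    rw [Set.disjoint_left]
    intro x hx
    obtain ⟨a, _, hxa⟩ := Set.mem_iUnion₂.mp hx
    exact fun hxB => (hFdisj a).le_bot ⟨hxa, hxB⟩
  obtain ⟨a, haA, b, hbC, hbB⟩ := main
  refine ⟨Subtype.val '' connectedComponent a, ?_, ?_, ?_, ?_, ?_⟩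
  · rintro x ⟨y, _, rfl⟩; exact y.2
  · exact (isClosed_connectedComponent.isCompact).image continuous_subtype_val
  · exact isConnected_connectedComponent.image _ continuous_subtype_val.continuousOn
  · exact ⟨a, ⟨a, mem_connectedComponent, rfl⟩, haA⟩
  · exact ⟨b, ⟨b, hbC, rfl⟩, hbB⟩
end

section
/- Let X be a complete metric space and {M_i : i = 1,2,…} a countable family of closed subsets of X each of which is a Z₁-set in X. If open sets P, Q ⊂ X can be joined by a path in X, then they can be joined by a path in X \ ∪M_i. -/
open Set Function Topology

/-- `A` is a `Z₁`-set in `X`: every path in `X` can be approximated, with respect to any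
open cover, by paths missing `A`. -/
def IsZ1Set {X : Type*} [TopologicalSpace X] (A : Set X) : Prop :=
  IsClosed A ∧ ∀ f : C(↥unitInterval, X), ∀ ω : Set (Set X),
    (∀ U ∈ ω, IsOpen U) → ⋃₀ ω = Set.univ →
      ∃ g : C(↥unitInterval, X), Set.range g ⊆ Aᶜ ∧
        ∀ t : ↥unitInterval, ∃ U ∈ ω, f t ∈ U ∧ g t ∈ U

/-- If each member of a countable family of closed `Z₁`-sets is removed from a complete
metric space, paths joining two open sets `P` and `Q` persist: if `P` and `Q` can be joined
by a path in `X`, they can be joined by a path in `X \ ⋃ Mᵢ`. -/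
theorem statement18 (X : Type) [MetricSpace X] [CompleteSpace X]
    (M : ℕ → Set X) (hM : ∀ i, IsZ1Set (M i))
    (P Q : Set X) (hP : IsOpen P) (hQ : IsOpen Q)
    (hpath : ∃ f : C(↥unitInterval, X), f 0 ∈ P ∧ f 1 ∈ Q) :
    ∃ g : C(↥unitInterval, X), g 0 ∈ P ∧ g 1 ∈ Q ∧
      Set.range g ⊆ (⋃ i, M i)ᶜ := by
  obtain ⟨f₀, hf0, hf1⟩ := hpath
  set G : ℕ → Set C(↥unitInterval, X) := fun i => {g | Set.range g ⊆ (M i)ᶜ} with hG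
  have hopen : ∀ i, IsOpen (G i) := by
    intro i
    have h := ContinuousMap.isOpen_setOf_mapsTo
      (isCompact_univ : IsCompact (Set.univ : Set ↥unitInterval)) (hM i).1.isOpen_compl
    convert h using 1
    ext g
    simp [hG, Set.range_subset_iff, Set.MapsTo]
  have hdense : ∀ i, Dense (G i) := by
    intro i
    rw [Metric.dense_iff]
    intro f ε hε
    obtain ⟨g, hg, hωg⟩ := (hM i).2 f (Set.range fun x => Metric.ball x (ε / 2))
      (by rintro U ⟨x, rfl⟩; exact Metric.isOpen_ball)
      (by
        rw [Set.sUnion_range]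
        ext x
        simp only [Set.mem_iUnion, Set.mem_univ, iff_true]
        exact ⟨x, Metric.mem_ball_self (by linarith)⟩)
    refine ⟨g, ?_, hg⟩
    rw [Metric.mem_ball, ContinuousMap.dist_lt_iff hε]
    intro t
    obtain ⟨U, ⟨x, rfl⟩, hft, hgt⟩ := hωg t
    calc dist (g t) (f t) ≤ dist (g t) x + dist x (f t) := dist_triangle _ _ _
      _ < ε / 2 + ε / 2 := by
          have := Metric.mem_ball.mp hft
          have := Metric.mem_ball.mp hgt
          rw [dist_comm x (f t)]
          linarith
      _ = ε := by ring
  have hbaire : Dense (⋂ i, G i) := dense_iInter_of_isOpen hopen hdense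
  have hW : IsOpen ({g : C(↥unitInterval, X) | g 0 ∈ P ∧ g 1 ∈ Q}) := by
    have h0 : Continuous fun g : C(↥unitInterval, X) => g 0 :=
      continuous_eval_const 0
    have h1 : Continuous fun g : C(↥unitInterval, X) => g 1 :=
      continuous_eval_const 1
    exact (hP.preimage h0).inter (hQ.preimage h1)
  obtain ⟨g, hgG, hg0, hg1⟩ := hbaire.exists_mem_open hW ⟨f₀, hf0, hf1⟩
  refine ⟨g, hg0, hg1, ?_⟩
  rw [Set.compl_iUnion]
  exact Set.subset_iInter fun i => Set.mem_iInter.mp hgG i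
end
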